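/- Let f ∈ ℤ[x₁,...,xₙ]ⁿ and suppose f : ℤⁿ → ℤⁿ is surjective. Then for every prime p, the induced map f : ℤₚⁿ → ℤₚⁿ on the p-adic integers is surjective. -/
import Mathlib

/-- If a polynomial map `f : ℤⁿ → ℤⁿ` is surjective, then for every prime `p` the
induced map `f : ℤₚⁿ → ℤₚⁿ` on the `p`-adic integers is surjective. -/
theorem stmt_12 (n : ℕ) (f : Fin n → MvPolynomial (Fin n) ℤ)
    (hsurj : Function.Surjective (fun a : Fin n → ℤ => fun i => MvPolynomial.eval a (f i))) :
    ∀ (p : ℕ) [Fact p.Prime],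
      Function.Surjective
        (fun a : Fin n → ℤ_[p] => fun i => MvPolynomial.aeval a (f i)) := by
  intro p _ b
  set F : (Fin n → ℤ_[p]) → (Fin n → ℤ_[p]) :=
    fun a i => MvPolynomial.aeval a (f i) with hF
  -- continuity of F
  have hcont : Continuous F := by
    apply continuous_pi
    intro i
    have : (fun a : Fin n → ℤ_[p] => MvPolynomial.aeval a (f i)) =
        fun a => MvPolynomial.eval a (MvPolynomial.map (Int.castRingHom ℤ_[p]) (f i)) := by
      funext a
      rw [MvPolynomial.eval_map, MvPolynomial.aeval_def, algebraMap_int_eq]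
    rw [this]
    exact MvPolynomial.continuous_eval _
  -- range of F is compact, hence closed
  have hcomp : IsCompact (Set.range F) := isCompact_range hcont
  have hclosed : IsClosed (Set.range F) := hcomp.isClosed
  -- the "integer points" map
  set c : (Fin n → ℤ) → (Fin n → ℤ_[p]) := fun a i => (a i : ℤ_[p]) with hc
  have hdense : Dense (Set.range c) := by
    have : Set.range c = Set.pi Set.univ fun _ : Fin n => Set.range (Int.cast : ℤ → ℤ_[p]) :=
      Set.range_piMap (fun _ : Fin n => (Int.cast : ℤ → ℤ_[p]))
    rw [this]
    exact dense_pi Set.univ fun i _ => (PadicInt.denseRange_intCast)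
  -- range c ⊆ range F
  have hsub : Set.range c ⊆ Set.range F := by
    rintro _ ⟨m, rfl⟩
    obtain ⟨a, ha⟩ := hsurj m
    refine ⟨c a, ?_⟩
    funext i
    have h := congrFun ha i
    simp only at h
    show MvPolynomial.aeval (c a) (f i) = (m i : ℤ_[p])
    rw [← h]
    show MvPolynomial.aeval (c a) (f i) = Int.castRingHom ℤ_[p] (MvPolynomial.eval a (f i))
    rw [MvPolynomial.eval, MvPolynomial.eval₂Hom_congr rfl rfl rfl]
    rw [show (MvPolynomial.eval₂Hom (RingHom.id ℤ) a) (f i)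
        = MvPolynomial.eval₂ (RingHom.id ℤ) a (f i) from rfl]
    rw [MvPolynomial.eval₂_comp_left (Int.castRingHom ℤ_[p]) (RingHom.id ℤ) a (f i),
      RingHom.comp_id, MvPolynomial.aeval_def, algebraMap_int_eq]
    rfl
  have hb : b ∈ closure (Set.range c) := hdense b
  have : b ∈ Set.range F := hclosed.closure_subset (closure_mono hsub hb)
  exact this
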